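/- Let A, B ∈ F_q[x] be additive polynomials with A(B(α)) = B(A(α)) for all α ∈ F_q, and let g ∈ F_q[x]. Then f(x) = A(x) + g(B(x)) permutes F_q if and only if A permutes ker B and the map x ↦ A(x) + B(g(x)) permutes im B. -/

import Mathlib

open Polynomial

private lemma additive_eval {p : ℕ} (hp : p.Prime) {F : Type*} [Field F] [CharP F p]
    {P : Polynomial F}
    (h : ∃ (m : ℕ) (a : ℕ → F), P = ∑ i ∈ Finset.range m, C (a i) * X ^ (p ^ i)) :
    P.eval 0 = 0 ∧ ∀ x y : F, P.eval (x + y) = P.eval x + P.eval y := by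
  haveI := Fact.mk hp
  obtain ⟨m, a, rfl⟩ := h
  constructor
  · rw [eval_finset_sum]
    apply Finset.sum_eq_zero
    intro i _
    simp [zero_pow (pow_ne_zero i hp.ne_zero)]
  · intro x y
    rw [eval_finset_sum, eval_finset_sum, eval_finset_sum, ← Finset.sum_add_distrib]
    apply Finset.sum_congr rfl
    intro i _
    simp [add_pow_char_pow, mul_add]

/-- Corollary: if the additive polynomials `A` and `B` commute, then
`f(x) = A(x) + g(B(x))` permutes `F_q` iff `A` permutes `ker B` and
`x ↦ A(x) + B(g(x))` permutes `im B`. -/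
theorem stmt_6 (p n : ℕ) (hp : p.Prime) (hn : 0 < n)
    (F : Type*) [Field F] [Fintype F] (hq : Fintype.card F = p ^ n) (hchar : CharP F p)
    (A B : Polynomial F)
    (hA : ∃ (m : ℕ) (a : ℕ → F),
      A = ∑ i ∈ Finset.range m, Polynomial.C (a i) * Polynomial.X ^ (p ^ i))
    (hB : ∃ (m : ℕ) (a : ℕ → F),
      B = ∑ i ∈ Finset.range m, Polynomial.C (a i) * Polynomial.X ^ (p ^ i))
    (hcomm : ∀ α : F, A.eval (B.eval α) = B.eval (A.eval α))
    (g : Polynomial F) :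
    Function.Bijective (fun x : F => A.eval x + g.eval (B.eval x)) ↔
      (Set.BijOn (fun x : F => A.eval x) {x : F | B.eval x = 0} {x : F | B.eval x = 0} ∧
        Set.BijOn (fun x : F => A.eval x + B.eval (g.eval x))
          (Set.range (fun x : F => B.eval x)) (Set.range (fun x : F => B.eval x))) := by
  obtain ⟨hA0, hAadd⟩ := additive_eval hp hA
  obtain ⟨hB0, hBadd⟩ := additive_eval hp hB
  have hAsub : ∀ x y : F, A.eval (x - y) = A.eval x - A.eval y := fun x y =>
    eq_sub_of_add_eq (by rw [← hAadd, sub_add_cancel])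
  set f : F → F := fun x => A.eval x + g.eval (B.eval x) with hf
  set h : F → F := fun x => A.eval x + B.eval (g.eval x) with hh
  -- B ∘ f = h ∘ B
  have key : ∀ x : F, B.eval (f x) = h (B.eval x) := by
    intro x
    simp only [hf, hh, hBadd, ← hcomm]
  constructor
  · rintro hbij
    constructor
    · rw [← Set.Finite.injOn_iff_bijOn_of_mapsTo (Set.toFinite _)]
      · intro x hx y hy hxy
        apply hbij.injective
        simp only [Set.mem_setOf_eq] at hx hy
        simp only at hxy
        simp only [hf, hx, hy, hxy]
      · intro x hx
        simp only [Set.mem_setOf_eq] at hx ⊢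
        rw [← hcomm, hx, hA0]
    · rw [← Set.Finite.surjOn_iff_bijOn_of_mapsTo (Set.toFinite _)]
      · rintro z ⟨y, rfl⟩
        obtain ⟨x, hx⟩ := hbij.surjective y
        exact ⟨B.eval x, ⟨x, rfl⟩, by rw [← key, hx]⟩
      · rintro z ⟨x, rfl⟩
        exact ⟨f x, by simpa using key x⟩
  · rintro ⟨hK, hS⟩
    rw [Finite.injective_iff_bijective.symm]
    intro x y hxy
    have hB1 : B.eval x = B.eval y := by
      apply hS.injOn ⟨x, rfl⟩ ⟨y, rfl⟩
      rw [← key, ← key, hxy]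
    have hker : B.eval (x - y) = 0 := by
      have := hBadd (x - y) y
      rw [sub_add_cancel, hB1] at this
      exact (right_eq_add.mp this)
    have hAxy : A.eval (x - y) = 0 := by
      have : f x - f y = A.eval x - A.eval y := by
        simp only [hf, hB1]; ring
      rw [hxy, sub_self] at this
      rw [hAsub, ← this]
    have : x - y = 0 := by
      have h0 : (0 : F) ∈ {x : F | B.eval x = 0} := Set.mem_setOf_eq.mpr hB0
      have := hK.injOn (Set.mem_setOf_eq.mpr hker) h0 (by simpa [hA0] using hAxy)
      exact this
    exact sub_eq_zero.mp this
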